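/- Let α > 0 and let Ψ₃₀, Ψ₂₁, Ψ₁₂, Ψ₀₃ be real numbers. Define the polynomials A₀(τ) = 3Ψ₃₀ + 2Ψ₂₁τ + Ψ₁₂τ² and B₀(τ) = Ψ₂₁ + 2Ψ₁₂τ + 3Ψ₀₃τ². Assume A₀(1) > 0, B₀(1) < 0, and that for every τ ∈ (0,1] with B₀(τ) ≠ 0 one has B₀(1)τ²/B₀(τ) > 0 and (A₀(τ)/A₀(1)) · (B₀(1)τ²/B₀(τ))^{α/(α+1)} = 1. Then Ψ₂₁ = 0 and Ψ₁₂ = 0. -/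

import Mathlib

open Filter Topology

lemma stmt0_aux (α : ℝ) (hα : 0 < α) (A0 B0 : ℝ → ℝ)
    (hAc : Continuous A0) (hA1 : 0 < A0 1)
    (hne : ∀ᶠ τ in 𝓝[>] (0:ℝ), B0 τ ≠ 0)
    (hten : Tendsto (fun τ => B0 1 * τ ^ 2 / B0 τ) (𝓝[>] (0:ℝ)) (𝓝 0))
    (hreg : ∀ τ ∈ Set.Ioc (0 : ℝ) 1, B0 τ ≠ 0 →
      0 < B0 1 * τ ^ 2 / B0 τ ∧
      (A0 τ / A0 1) * (B0 1 * τ ^ 2 / B0 τ) ^ (α / (α + 1)) = 1) : False := by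
  have hβ : 0 < α / (α + 1) := div_pos hα (by linarith)
  have h1 : Tendsto (fun τ => A0 τ / A0 1) (𝓝[>] (0:ℝ)) (𝓝 (A0 0 / A0 1)) :=
    ((hAc.tendsto 0).div_const (A0 1)).mono_left nhdsWithin_le_nhds
  have hcont : ContinuousAt (fun x : ℝ => x ^ (α / (α + 1))) 0 :=
    Real.continuousAt_rpow_const 0 _ (Or.inr hβ.le)
  have h2 : Tendsto (fun τ => (B0 1 * τ ^ 2 / B0 τ) ^ (α / (α + 1)))
      (𝓝[>] (0:ℝ)) (𝓝 0) := by
    have := hcont.tendsto.comp hten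
    rwa [Real.zero_rpow (ne_of_gt hβ)] at this
  have hE : Tendsto (fun τ => (A0 τ / A0 1) * (B0 1 * τ ^ 2 / B0 τ) ^ (α / (α + 1)))
      (𝓝[>] (0:ℝ)) (𝓝 0) := by
    have := h1.mul h2
    rwa [mul_zero] at this
  have hlt : ∀ᶠ τ in 𝓝[>] (0:ℝ),
      (A0 τ / A0 1) * (B0 1 * τ ^ 2 / B0 τ) ^ (α / (α + 1)) < 1 :=
    hE.eventually_lt_const (by norm_num)
  have hIoc : ∀ᶠ τ in 𝓝[>] (0:ℝ), τ ∈ Set.Ioc (0:ℝ) 1 :=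
    Ioc_mem_nhdsGT_of_mem ⟨le_refl 0, one_pos⟩
  obtain ⟨τ, hτm, hτne, hτlt⟩ := (hIoc.and (hne.and hlt)).exists
  exact absurd (hreg τ hτm hτne).2 (ne_of_lt hτlt)

theorem stmt0 (α Ψ30 Ψ21 Ψ12 Ψ03 : ℝ)
    (A0 B0 : ℝ → ℝ)
    (hA0 : ∀ τ : ℝ, A0 τ = 3 * Ψ30 + 2 * Ψ21 * τ + Ψ12 * τ ^ 2)
    (hB0 : ∀ τ : ℝ, B0 τ = Ψ21 + 2 * Ψ12 * τ + 3 * Ψ03 * τ ^ 2)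
    (hα : 0 < α)
    (hA1 : 0 < A0 1)
    (hB1 : B0 1 < 0)
    (hreg : ∀ τ ∈ Set.Ioc (0 : ℝ) 1, B0 τ ≠ 0 →
      0 < B0 1 * τ ^ 2 / B0 τ ∧
      (A0 τ / A0 1) * (B0 1 * τ ^ 2 / B0 τ) ^ (α / (α + 1)) = 1) :
    Ψ21 = 0 ∧ Ψ12 = 0 := by
  have hAc : Continuous A0 := by
    have : A0 = fun τ => 3 * Ψ30 + 2 * Ψ21 * τ + Ψ12 * τ ^ 2 := funext hA0
    rw [this]; continuity
  have hBc : Continuous B0 := by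
    have : B0 = fun τ => Ψ21 + 2 * Ψ12 * τ + 3 * Ψ03 * τ ^ 2 := funext hB0
    rw [this]; continuity
  have hB00 : B0 0 = Ψ21 := by rw [hB0]; ring
  have h21 : Ψ21 = 0 := by
    by_contra h21
    have hBt : Tendsto B0 (𝓝[>] (0:ℝ)) (𝓝 Ψ21) := by
      have := hBc.tendsto 0
      rw [hB00] at this
      exact this.mono_left nhdsWithin_le_nhds
    have hne : ∀ᶠ τ in 𝓝[>] (0:ℝ), B0 τ ≠ 0 := hBt.eventually_ne h21
    have hten : Tendsto (fun τ => B0 1 * τ ^ 2 / B0 τ) (𝓝[>] (0:ℝ)) (𝓝 0) := by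
      have hnum : Tendsto (fun τ : ℝ => B0 1 * τ ^ 2) (𝓝[>] (0:ℝ)) (𝓝 0) := by
        have : Tendsto (fun τ : ℝ => B0 1 * τ ^ 2) (𝓝 (0:ℝ)) (𝓝 (B0 1 * 0 ^ 2)) := by
          exact (continuous_const.mul (continuous_pow 2)).tendsto 0
        simpa using this.mono_left nhdsWithin_le_nhds
      have := hnum.div hBt h21
      rw [zero_div] at this
      exact this
    exact stmt0_aux α hα A0 B0 hAc hA1 hne hten hreg
  refine ⟨h21, ?_⟩
  by_contra h12
  let D : ℝ → ℝ := fun τ => 2 * Ψ12 + 3 * Ψ03 * τ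
  have hDc : Continuous D :=
    continuous_const.add (continuous_const.mul continuous_id)
  have hD0 : D 0 = 2 * Ψ12 := by show 2 * Ψ12 + 3 * Ψ03 * 0 = 2 * Ψ12; ring
  have hDt : Tendsto D (𝓝[>] (0:ℝ)) (𝓝 (2 * Ψ12)) := by
    have := hDc.tendsto 0
    rw [hD0] at this
    exact this.mono_left nhdsWithin_le_nhds
  have h2Ψ : (2:ℝ) * Ψ12 ≠ 0 := mul_ne_zero two_ne_zero h12
  have hDne : ∀ᶠ τ in 𝓝[>] (0:ℝ), D τ ≠ 0 := hDt.eventually_ne h2Ψ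
  have hpos : ∀ᶠ τ in 𝓝[>] (0:ℝ), (0:ℝ) < τ := eventually_mem_nhdsWithin
  have hBeq : ∀ τ : ℝ, B0 τ = τ * D τ := by
    intro τ; rw [hB0, h21]; show _ = τ * (2 * Ψ12 + 3 * Ψ03 * τ); ring
  have hne : ∀ᶠ τ in 𝓝[>] (0:ℝ), B0 τ ≠ 0 := by
    filter_upwards [hDne, hpos] with τ hdτ hτ
    rw [hBeq τ]
    exact mul_ne_zero (ne_of_gt hτ) hdτ
  have hten : Tendsto (fun τ => B0 1 * τ ^ 2 / B0 τ) (𝓝[>] (0:ℝ)) (𝓝 0) := by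
    have hten' : Tendsto (fun τ => B0 1 * τ / D τ) (𝓝[>] (0:ℝ)) (𝓝 0) := by
      have hnum : Tendsto (fun τ : ℝ => B0 1 * τ) (𝓝[>] (0:ℝ)) (𝓝 0) := by
        have h : Tendsto (fun τ : ℝ => B0 1 * τ) (𝓝 (0:ℝ)) (𝓝 (B0 1 * 0)) :=
          (continuous_const.mul continuous_id).tendsto 0
        rw [mul_zero] at h
        exact h.mono_left nhdsWithin_le_nhds
      have h := hnum.div hDt h2Ψ
      rw [zero_div] at h
      exact h
    refine hten'.congr' ?_
    filter_upwards [hDne, hpos] with τ hdτ hτ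
    rw [hBeq τ, pow_two, show B0 1 * (τ * τ) = τ * (B0 1 * τ) by ring,
      mul_div_mul_left _ _ (ne_of_gt hτ)]
  exact stmt0_aux α hα A0 B0 hAc hA1 hne hten hreg
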